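/- arXiv:2307.06976 — 6 statements merged into one kernel-verified Lean document; each statement's English description precedes it below -/
import Mathlib

section
/- Let G be a finite simple graph with unanimous thresholds (t(v) = deg(v) for every vertex v). A set S of vertices is a target set (i.e., the activation process starting from S eventually infects all vertices) if and only if S is a vertex cover of G. -/
open scoped Classical
open Finset

/-- One round of the activation (infection) process: every vertex whose number of
already-infected neighbours reaches its threshold becomes infected. -/
noncomputable def infectStep {V : Type*} [Fintype V] (G : SimpleGraph V) (t : V → ℕ)
    (S : Finset V) : Finset V :=
  S ∪ Finset.univ.filter fun v => t v ≤ ((G.neighborFinset v) ∩ S).card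

/-- The set of infected vertices after `i` rounds, starting from `S`. -/
noncomputable def infect {V : Type*} [Fintype V] (G : SimpleGraph V) (t : V → ℕ)
    (S : Finset V) : ℕ → Finset V
  | 0 => S
  | i + 1 => infectStep G t (infect G t S i)

/-- `S` is a target set if the activation process starting from `S` eventually
infects all vertices. -/
def IsTargetSet {V : Type*} [Fintype V] (G : SimpleGraph V) (t : V → ℕ)
    (S : Finset V) : Prop :=
  ∃ i, infect G t S i = Finset.univ

/-- With unanimous thresholds (threshold = degree), a set is a target set
iff it is a vertex cover. -/
theorem tss_unanimous_iff_vertexCover {V : Type*} [Fintype V] (G : SimpleGraph V)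
    (S : Finset V) :
    IsTargetSet G (fun v => G.degree v) S ↔
      ∀ u v : V, G.Adj u v → u ∈ S ∨ v ∈ S := by
  constructor
  · rintro ⟨i, hi⟩ u v huv
    by_contra h
    push_neg at h
    obtain ⟨hu, hv⟩ := h
    -- invariant: u and v never infected
    have key : ∀ j, u ∉ infect G (fun v => G.degree v) S j ∧
        v ∉ infect G (fun v => G.degree v) S j := by
      intro j
      induction j with
      | zero => exact ⟨hu, hv⟩
      | succ n ih =>
        obtain ⟨ihu, ihv⟩ := ih
        set T := infect G (fun v => G.degree v) S n with hT
        have step : ∀ w x : V, G.Adj w x → x ∉ T →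
            ¬ (G.degree w ≤ ((G.neighborFinset w) ∩ T).card) := by
          intro w x hwx hxT hle
          have hsub : (G.neighborFinset w) ∩ T ⊂ G.neighborFinset w := by
            refine Finset.ssubset_iff_of_subset (Finset.inter_subset_left) |>.mpr ?_
            exact ⟨x, by simpa using hwx, fun hx => hxT (Finset.mem_inter.mp hx).2⟩
          have := Finset.card_lt_card hsub
          rw [SimpleGraph.card_neighborFinset_eq_degree] at this
          omega
        constructor
        · intro hmem
          simp only [infect, infectStep, Finset.mem_union, Finset.mem_filter,
            Finset.mem_univ, true_and] at hmem
          rcases hmem with h1 | h2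
          · exact ihu h1
          · exact step u v huv ihv h2
        · intro hmem
          simp only [infect, infectStep, Finset.mem_union, Finset.mem_filter,
            Finset.mem_univ, true_and] at hmem
          rcases hmem with h1 | h2
          · exact ihv h1
          · exact step v u huv.symm ihu h2
    have := (key i).1
    rw [hi] at this
    exact this (Finset.mem_univ u)
  · intro hcover
    refine ⟨1, ?_⟩
    ext v
    simp only [infect, infectStep, Finset.mem_union, Finset.mem_filter,
      Finset.mem_univ, true_and, iff_true]
    by_cases hv : v ∈ S
    · exact Or.inl hv
    · right
      have : G.neighborFinset v ∩ S = G.neighborFinset v := by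
        apply Finset.inter_eq_left.mpr
        intro w hw
        rw [SimpleGraph.mem_neighborFinset] at hw
        rcases hcover v w hw with h | h
        · exact absurd h hv
        · exact h
      refine Finset.mem_filter.mpr ⟨Finset.mem_univ _, ?_⟩
      rw [this, SimpleGraph.card_neighborFinset_eq_degree]
end

section
/- Let G be a finite simple graph with unanimous thresholds. There is a target set of size at most k if and only if G has a vertex cover of size at most k. -/
open scoped Classical
open Finset

/-- With unanimous thresholds, there is a target set of size at most k
iff there is a vertex cover of size at most k. -/
theorem tss_unanimous_card_iff_vertexCover_card {V : Type*} [Fintype V]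
    (G : SimpleGraph V) (k : ℕ) :
    (∃ S : Finset V, S.card ≤ k ∧ IsTargetSet G (fun v => G.degree v) S) ↔
      (∃ C : Finset V, C.card ≤ k ∧ ∀ u v : V, G.Adj u v → u ∈ C ∨ v ∈ C) := by
  constructor
  · rintro ⟨S, hc, i, hi⟩
    refine ⟨S, hc, ?_⟩
    intro u v huv
    by_contra h
    push_neg at h
    obtain ⟨hu, hv⟩ := h
    have key : ∀ j, u ∉ infect G (fun v => G.degree v) S j ∧
        v ∉ infect G (fun v => G.degree v) S j := by
      intro j
      induction j with
      | zero => exact ⟨hu, hv⟩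
      | succ j ih =>
        have blocked : ∀ a b : V, G.Adj a b →
            b ∉ infect G (fun v => G.degree v) S j →
            ¬ (G.degree a ≤ ((G.neighborFinset a) ∩ infect G (fun v => G.degree v) S j).card) := by
          intro a b hab hb hle
          have hmem : b ∈ G.neighborFinset a := by
            rw [SimpleGraph.mem_neighborFinset]; exact hab
          have hss : (G.neighborFinset a) ∩ infect G (fun v => G.degree v) S j ⊂
              G.neighborFinset a := by
            rw [Finset.ssubset_iff_of_subset (Finset.inter_subset_left)]
            exact ⟨b, hmem, fun hb' => hb (Finset.mem_inter.mp hb').2⟩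
          have := Finset.card_lt_card hss
          rw [G.card_neighborFinset_eq_degree] at this
          omega
        constructor
        · simp only [infect, infectStep, Finset.mem_union, Finset.mem_filter,
            Finset.mem_univ, true_and]
          push_neg
          exact ⟨ih.1, Nat.lt_of_not_le (blocked u v huv ih.2)⟩
        · simp only [infect, infectStep, Finset.mem_union, Finset.mem_filter,
            Finset.mem_univ, true_and]
          push_neg
          exact ⟨ih.2, Nat.lt_of_not_le (blocked v u huv.symm ih.1)⟩
    have := (key i).1
    rw [hi] at this
    exact this (Finset.mem_univ u)
  · rintro ⟨C, hc, hcov⟩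
    refine ⟨C, hc, 1, ?_⟩
    ext v
    simp only [infect, infectStep, Finset.mem_union, Finset.mem_filter,
      Finset.mem_univ, true_and, iff_true]
    by_cases hv : v ∈ C
    · exact Or.inl hv
    · right
      have hsub : G.neighborFinset v ⊆ C := by
        intro w hw
        rw [SimpleGraph.mem_neighborFinset] at hw
        exact (hcov v w hw).resolve_left hv
      exact Finset.mem_filter.mpr ⟨Finset.mem_univ v, by
        rw [Finset.inter_eq_left.mpr hsub, G.card_neighborFinset_eq_degree]⟩
end

section
/- Let G be a graph, t a threshold function, S a target set, and v ∈ S a vertex with t(v) ≤ 1 and deg(v) ≥ 1. Then for any neighbor u of v, the set (S \ {v}) ∪ {u} is also a target set. -/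
open scoped Classical
open Finset

lemma infectStep_mono {V : Type*} [Fintype V] (G : SimpleGraph V) (t : V → ℕ)
    {S T : Finset V} (h : S ⊆ T) : infectStep G t S ⊆ infectStep G t T := by
  apply Finset.union_subset_union h
  intro x hx
  simp only [Finset.mem_filter, Finset.mem_univ, true_and] at hx ⊢
  exact hx.trans (Finset.card_le_card (Finset.inter_subset_inter le_rfl h))

lemma infect_mono {V : Type*} [Fintype V] (G : SimpleGraph V) (t : V → ℕ)
    {S T : Finset V} (h : S ⊆ T) (i : ℕ) : infect G t S i ⊆ infect G t T i := by
  induction i with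
  | zero => exact h
  | succ n ih => exact infectStep_mono G t ih

lemma subset_infectStep {V : Type*} [Fintype V] (G : SimpleGraph V) (t : V → ℕ)
    (S : Finset V) : S ⊆ infectStep G t S := Finset.subset_union_left

lemma mem_infectStep_of_le {V : Type*} [Fintype V] (G : SimpleGraph V) (t : V → ℕ)
    (S : Finset V) (x : V) (h : t x ≤ ((G.neighborFinset x) ∩ S).card) :
    x ∈ infectStep G t S :=
  Finset.mem_union_right _ (by simp [h])

lemma infect_shift {V : Type*} [Fintype V] (G : SimpleGraph V) (t : V → ℕ)
    (S : Finset V) (i : ℕ) :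
    infect G t S (i + 1) = infect G t (infectStep G t S) i := by
  induction i with
  | zero => rfl
  | succ n ih => show infectStep G t _ = infectStep G t _; rw [ih]

/-- A vertex of threshold at most 1 and positive degree in a target set may be
replaced by any of its neighbours. -/
theorem targetSet_swap_leaf {V : Type*} [Fintype V] [DecidableEq V]
    (G : SimpleGraph V) (t : V → ℕ) (S : Finset V) (v u : V)
    (hS : IsTargetSet G t S) (hv : v ∈ S) (htv : t v ≤ 1)
    (hdeg : 1 ≤ G.degree v) (hu : G.Adj v u) :
    IsTargetSet G t (insert u (S.erase v)) := by
  obtain ⟨i, hi⟩ := hS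
  set S' := insert u (S.erase v) with hS'
  have hsub : S ⊆ infectStep G t S' := by
    intro x hx
    by_cases hxv : x = v
    · subst hxv
      apply mem_infectStep_of_le
      refine htv.trans ?_
      exact Finset.card_pos.mpr ⟨u, by
        simp [S', SimpleGraph.mem_neighborFinset, hu]⟩
    · exact subset_infectStep G t S' (Finset.mem_insert_of_mem
        (Finset.mem_erase.mpr ⟨hxv, hx⟩))
  refine ⟨i + 1, ?_⟩
  rw [infect_shift]
  exact Finset.univ_subset_iff.mp (hi ▸ infect_mono G t hsub i)
end

section
/- Let G' be obtained from a graph G by subdividing one edge e once, creating a new vertex v' with threshold t'(v') = 1, while all other thresholds are unchanged. If S ⊆ V(G) is a target set for G with respect to t, then S is also a target set for G' with respect to t'. -/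
open scoped Classical
open Finset

lemma mem_infectStep' {W : Type*} [Fintype W] (H : SimpleGraph W) (τ : W → ℕ)
    (T : Finset W) (v : W) :
    v ∈ infectStep H τ T ↔ v ∈ T ∨ τ v ≤ ((H.neighborFinset v) ∩ T).card := by
  simp [infectStep]

lemma subset_infectStep' {W : Type*} [Fintype W] (H : SimpleGraph W) (τ : W → ℕ)
    (T : Finset W) : T ⊆ infectStep H τ T :=
  Finset.subset_union_left

/-- Subdividing an edge once (new vertex with threshold 1) preserves target sets. -/
theorem targetSet_subdivide {V : Type*} [Fintype V] [DecidableEq V]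
    (G : SimpleGraph V) (G' : SimpleGraph (V ⊕ Unit)) (t : V → ℕ) (u w : V)
    (huw : G.Adj u w)
    (h1 : ∀ a b : V, G'.Adj (Sum.inl a) (Sum.inl b) ↔ (G.Adj a b ∧ s(a, b) ≠ s(u, w)))
    (h2 : ∀ a : V, G'.Adj (Sum.inl a) (Sum.inr ()) ↔ (a = u ∨ a = w))
    (S : Finset V) (hS : IsTargetSet G t S) :
    IsTargetSet G' (Sum.elim t fun _ => 1) (S.image Sum.inl) := by
  classical
  obtain ⟨i, hi⟩ := hS
  set t' : V ⊕ Unit → ℕ := Sum.elim t fun _ => 1 with ht'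
  set S' : Finset (V ⊕ Unit) := S.image Sum.inl with hS'
  -- key invariant
  have key : ∀ n, (infect G t S n).image Sum.inl ⊆ infect G' t' S' (2 * n) := by
    intro n
    induction n with
    | zero => simp [infect, hS']
    | succ n ih =>
      have h2n : 2 * (n + 1) = (2 * n) + 1 + 1 := by ring
      rw [h2n]
      set A := infect G t S n with hA
      set B := infect G' t' S' (2 * n) with hB
      have hBstep : infect G' t' S' (2 * n + 1) = infectStep G' t' B := rfl
      set B1 := infectStep G' t' B with hB1
      have hBB1 : B ⊆ B1 := by rw [hB1]; exact subset_infectStep' G' t' B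
      intro x hx
      simp only [Finset.mem_image] at hx
      obtain ⟨y, hy, rfl⟩ := hx
      have hy' := (mem_infectStep' G t A y).1 hy
      show Sum.inl y ∈ infectStep G' t' B1
      rw [mem_infectStep']
      rcases hy' with hyA | hycard
      · left
        exact hBB1 (ih (Finset.mem_image_of_mem _ hyA))
      · right
        show t' (Sum.inl y) ≤ _
        show t y ≤ _
        refine le_trans hycard (Finset.card_le_card_of_injOn
            (fun z => if s(y, z) = s(u, w) then Sum.inr () else Sum.inl z) ?_ ?_)
        · intro z hz
          simp only [Finset.mem_coe, Finset.mem_inter, SimpleGraph.mem_neighborFinset] at hz ⊢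
          by_cases hsz : s(y, z) = s(u, w)
          · rw [if_pos hsz]
            rcases Sym2.eq_iff.1 hsz with ⟨rfl, rfl⟩ | ⟨rfl, rfl⟩
            all_goals refine ⟨?_, ?_⟩
            · exact (h2 y).2 (Or.inl rfl)
            · -- Sum.inr () ∈ B1 since z (= w) is in A and adjacent to the new vertex
              rw [mem_infectStep']
              right
              have hzB : Sum.inl z ∈ B := ih (Finset.mem_image_of_mem _ hz.2)
              have hadj : G'.Adj (Sum.inr ()) (Sum.inl z) :=
                G'.adj_symm ((h2 z).2 (Or.inr rfl))
              show (1:ℕ) ≤ _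
              exact Finset.card_pos.2 ⟨Sum.inl z, by
                simp [SimpleGraph.mem_neighborFinset, hadj, hzB]⟩
            · exact (h2 y).2 (Or.inr rfl)
            · rw [mem_infectStep']
              right
              have hzB : Sum.inl z ∈ B := ih (Finset.mem_image_of_mem _ hz.2)
              have hadj : G'.Adj (Sum.inr ()) (Sum.inl z) :=
                G'.adj_symm ((h2 z).2 (Or.inl rfl))
              show (1:ℕ) ≤ _
              exact Finset.card_pos.2 ⟨Sum.inl z, by
                simp [SimpleGraph.mem_neighborFinset, hadj, hzB]⟩
          · rw [if_neg hsz]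
            refine ⟨(h1 y z).2 ⟨hz.1, hsz⟩, hBB1 (ih (Finset.mem_image_of_mem _ hz.2))⟩
        · intro z1 hz1 z2 hz2 hf
          by_cases h1' : s(y, z1) = s(u, w) <;> by_cases h2' : s(y, z2) = s(u, w) <;>
            simp only [if_pos, if_neg, h1', h2', if_true, if_false] at hf
          · exact Sym2.congr_right.1 (h1'.trans h2'.symm)
          · exact absurd hf (by simp)
          · exact absurd hf (by simp)
          · exact Sum.inl.inj hf
  -- conclude
  refine ⟨2 * i + 1, ?_⟩
  have hall : (Finset.univ : Finset V).image Sum.inl ⊆ infect G' t' S' (2 * i) := by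
    rw [← hi]; exact key i
  have hBstep : infect G' t' S' (2 * i + 1) = infectStep G' t' (infect G' t' S' (2 * i)) := rfl
  rw [hBstep]
  apply Finset.eq_univ_of_forall
  rintro (x | ⟨⟩)
  · exact subset_infectStep' G' t' (infect G' t' S' (2 * i)) (hall (Finset.mem_image_of_mem _ (Finset.mem_univ x)))
  · refine (mem_infectStep' G' t' _ _).2 (Or.inr ?_)
    have huB : Sum.inl u ∈ infect G' t' S' (2 * i) :=
      hall (Finset.mem_image_of_mem _ (Finset.mem_univ u))
    have hadj : G'.Adj (Sum.inr ()) (Sum.inl u) := G'.adj_symm ((h2 u).2 (Or.inl rfl))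
    show (1:ℕ) ≤ _
    exact Finset.card_pos.2 ⟨Sum.inl u, by
      simp [SimpleGraph.mem_neighborFinset, hadj, huB]⟩
end

section
/- H has an independent set of size at least k if and only if G, obtained from H by subdividing one edge {u,v} exactly 6q times, has an independent set of size at least k + 3q. -/
open scoped Classical
open Finset

/-- H has an independent set of size ≥ k iff the graph obtained by subdividing
one edge 6q times has an independent set of size ≥ k + 3q. -/
theorem indep_iff_subdivide {V : Type*} [Fintype V] [DecidableEq V] (q k : ℕ)
    (H : SimpleGraph V) (G : SimpleGraph (V ⊕ Fin (6 * q)))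
    (u w : V) (huw : H.Adj u w) (hq : 1 ≤ q)
    (hin : ∀ a b : V, G.Adj (Sum.inl a) (Sum.inl b) ↔ (H.Adj a b ∧ s(a, b) ≠ s(u, w)))
    (hend : ∀ (a : V) (i : Fin (6 * q)), G.Adj (Sum.inl a) (Sum.inr i) ↔
      ((a = u ∧ (i : ℕ) = 0) ∨ (a = w ∧ (i : ℕ) = 6 * q - 1)))
    (hpath : ∀ i j : Fin (6 * q), G.Adj (Sum.inr i) (Sum.inr j) ↔
      ((i : ℕ) + 1 = (j : ℕ) ∨ (j : ℕ) + 1 = (i : ℕ))) :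
    (∃ I : Finset V, k ≤ I.card ∧ ∀ a ∈ I, ∀ b ∈ I, ¬ H.Adj a b) ↔
      (∃ I' : Finset (V ⊕ Fin (6 * q)), k + 3 * q ≤ I'.card ∧
        ∀ a ∈ I', ∀ b ∈ I', ¬ G.Adj a b) := by
  constructor
  · rintro ⟨I, hIcard, hInd⟩
    set c : ℕ := if w ∈ I then 0 else 1 with hc
    have hc1 : c ≤ 1 := by rw [hc]; split <;> omega
    have hkey0 : c = 0 → u ∉ I := by
      intro h0 hu
      rw [hc] at h0
      split at h0
      · exact hInd u hu w ‹w ∈ I› huw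
      · omega
    have hkey1 : c = 1 → w ∉ I := by
      intro h1 hw
      rw [hc] at h1
      split at h1
      · omega
      · exact ‹w ∉ I› hw
    set J : Finset (Fin (6 * q)) := Finset.univ.image
      (fun m : Fin (3 * q) => (⟨2 * (m : ℕ) + c, by have := m.isLt; omega⟩ : Fin (6 * q)))
      with hJ
    have hJmem : ∀ i ∈ J, (i : ℕ) % 2 = c := by
      intro i hi
      rw [hJ, Finset.mem_image] at hi
      obtain ⟨m, _, rfl⟩ := hi
      simp only []
      omega
    have hJcard : J.card = 3 * q := by
      rw [hJ, Finset.card_image_of_injective _ ?_, Finset.card_univ, Fintype.card_fin]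
      intro a b hab
      have h2 : 2 * (a : ℕ) + c = 2 * (b : ℕ) + c := congrArg Fin.val hab
      exact Fin.ext (by omega)
    refine ⟨I.image Sum.inl ∪ J.image Sum.inr, ?_, ?_⟩
    · rw [Finset.card_union_of_disjoint ?_, Finset.card_image_of_injective _ Sum.inl_injective,
        Finset.card_image_of_injective _ Sum.inr_injective, hJcard]
      · omega
      · simp [Finset.disjoint_left]
    · intro x hx y hy hadj
      simp only [Finset.mem_union, Finset.mem_image] at hx hy
      rcases hx with ⟨a, ha, rfl⟩ | ⟨i, hi, rfl⟩ <;>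
        rcases hy with ⟨b, hb, rfl⟩ | ⟨j, hj, rfl⟩
      · exact hInd a ha b hb ((hin a b).1 hadj).1
      · have := (hend a j).1 hadj
        have hj2 := hJmem j hj
        rcases this with ⟨rfl, h0⟩ | ⟨rfl, h1⟩
        · exact hkey0 (by omega) ha
        · exact hkey1 (by omega) ha
      · have := (hend b i).1 hadj.symm
        have hi2 := hJmem i hi
        rcases this with ⟨rfl, h0⟩ | ⟨rfl, h1⟩
        · exact hkey0 (by omega) hb
        · exact hkey1 (by omega) hb
      · have := (hpath i j).1 hadj
        have hi2 := hJmem i hi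
        have hj2 := hJmem j hj
        omega
  · rintro ⟨I', hcard, hInd⟩
    set A : Finset V := Finset.univ.filter (fun a => Sum.inl a ∈ I') with hA
    set B : Finset (Fin (6 * q)) := Finset.univ.filter (fun i => Sum.inr i ∈ I') with hB
    clear_value A B
    have hAmem : ∀ a ∈ A, Sum.inl a ∈ I' := by
      intro a ha; rw [hA, Finset.mem_filter] at ha; exact ha.2
    have hBmem : ∀ i ∈ B, Sum.inr i ∈ I' := by
      intro i hi; rw [hB, Finset.mem_filter] at hi; exact hi.2
    have hsplit : I'.card ≤ A.card + B.card := by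
      have hsub : I' ⊆ A.image Sum.inl ∪ B.image Sum.inr := by
        intro x hx
        rcases x with a | i
        · simp only [Finset.mem_union, Finset.mem_image]
          exact Or.inl ⟨a, by rw [hA, Finset.mem_filter]; exact ⟨Finset.mem_univ _, hx⟩, rfl⟩
        · simp only [Finset.mem_union, Finset.mem_image]
          exact Or.inr ⟨i, by rw [hB, Finset.mem_filter]; exact ⟨Finset.mem_univ _, hx⟩, rfl⟩
      calc I'.card ≤ _ := Finset.card_le_card hsub
        _ ≤ _ := Finset.card_union_le _ _
        _ = A.card + B.card := by
            rw [Finset.card_image_of_injective _ Sum.inl_injective,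
              Finset.card_image_of_injective _ Sum.inr_injective]
    have hBinj : ∀ i ∈ B, ∀ j ∈ B, (i : ℕ) + 1 ≠ (j : ℕ) := by
      intro i hi j hj h
      exact hInd _ (hBmem i hi) _ (hBmem j hj) ((hpath i j).2 (Or.inl h))
    by_cases hboth : Sum.inl u ∈ I' ∧ Sum.inl w ∈ I'
    · have hz0 : ∀ i ∈ B, (i : ℕ) ≠ 0 := by
        intro i hi h0
        exact hInd _ hboth.1 _ (hBmem i hi) ((hend u i).2 (Or.inl ⟨rfl, h0⟩))
      have hz1 : ∀ i ∈ B, (i : ℕ) ≠ 6 * q - 1 := by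
        intro i hi h1
        exact hInd _ hboth.2 _ (hBmem i hi) ((hend w i).2 (Or.inr ⟨rfl, h1⟩))
      have hBcard : B.card ≤ 3 * q - 1 := by
        rw [← Finset.card_range (3 * q - 1)]
        apply Finset.card_le_card_of_injOn (fun i : Fin (6 * q) => ((i : ℕ) - 1) / 2)
          (t := Finset.range (3 * q - 1))
        · intro i hi
          have := i.isLt
          have := hz0 i hi
          have := hz1 i hi
          rw [Finset.mem_coe, Finset.mem_range]; beta_reduce
          omega
        · intro i hi j hj hij
          simp only at hij
          have hi1 := hz0 i hi
          have hj1 := hz0 j hj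
          have hli := i.isLt
          have hlj := j.isLt
          have h1 := hBinj i hi j hj
          have h2 := hBinj j hj i hi
          exact Fin.ext (by omega)
      have hwA : w ∈ A := by rw [hA, Finset.mem_filter]; exact ⟨Finset.mem_univ _, hboth.2⟩
      refine ⟨A.erase w, ?_, ?_⟩
      · have := Finset.card_erase_of_mem hwA
        omega
      · intro a ha b hb hab
        have ha' := Finset.mem_of_mem_erase ha
        have hb' := Finset.mem_of_mem_erase hb
        have haw := Finset.ne_of_mem_erase ha
        have hbw := Finset.ne_of_mem_erase hb
        by_cases hsym : s(a, b) = s(u, w)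
        · rw [Sym2.eq_iff] at hsym
          rcases hsym with ⟨rfl, rfl⟩ | ⟨rfl, rfl⟩
          · exact hbw rfl
          · exact haw rfl
        · exact hInd _ (hAmem a ha') _ (hAmem b hb') ((hin a b).2 ⟨hab, hsym⟩)
    · have hBcard : B.card ≤ 3 * q := by
        rw [← Finset.card_range (3 * q)]
        apply Finset.card_le_card_of_injOn (fun i : Fin (6 * q) => (i : ℕ) / 2)
          (t := Finset.range (3 * q))
        · intro i hi
          have := i.isLt
          rw [Finset.mem_coe, Finset.mem_range]; beta_reduce
          omega
        · intro i hi j hj hij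
          simp only at hij
          have hli := i.isLt
          have hlj := j.isLt
          have h1 := hBinj i hi j hj
          have h2 := hBinj j hj i hi
          exact Fin.ext (by omega)
      refine ⟨A, by omega, ?_⟩
      intro a ha b hb hab
      by_cases hsym : s(a, b) = s(u, w)
      · rw [Sym2.eq_iff] at hsym
        rcases hsym with ⟨rfl, rfl⟩ | ⟨rfl, rfl⟩
        · exact hboth ⟨hAmem a ha, hAmem b hb⟩
        · exact hboth ⟨hAmem b hb, hAmem a ha⟩
      · exact hInd _ (hAmem a ha) _ (hAmem b hb) ((hin a b).2 ⟨hab, hsym⟩)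
end

section
/- Cherry gadget correctness: Let G' be obtained from G by attaching a 'cherry' (a path g^ℓ – g^m – g^r on three new vertices) to a vertex v via the edge {v, g^m}, with thresholds t'(g^ℓ) = t'(g^r) = 1, t'(g^m) = 2, t'(v) = t(v) + 1, and t' = t elsewhere. Then G has a target set of size at most k if and only if G' has a target set of size at most k + 1. -/
open scoped Classical
open Finset

lemma infect_succ' {V : Type*} [Fintype V] (G : SimpleGraph V) (t : V → ℕ)
    (S : Finset V) (i : ℕ) :
    infect G t S (i + 1) = infectStep G t (infect G t S i) := rfl

lemma mem_infectStep'_s16 {V : Type*} [Fintype V] (G : SimpleGraph V) (t : V → ℕ)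
    (S : Finset V) (y : V) :
    y ∈ infectStep G t S ↔ y ∈ S ∨ t y ≤ ((G.neighborFinset y) ∩ S).card := by
  simp [infectStep]

lemma infect_mono_succ' {V : Type*} [Fintype V] (G : SimpleGraph V) (t : V → ℕ)
    (S : Finset V) (i : ℕ) :
    infect G t S i ⊆ infect G t S (i + 1) := by
  rw [infect_succ', infectStep]
  exact Finset.subset_union_left

lemma inter_irrel {W : Type*} {i1 i2 : DecidableEq W} (s u : Finset W) :
    @Inter.inter _ (@Finset.instInter W i1) s u
      = @Inter.inter _ (@Finset.instInter W i2) s u :=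
  Finset.ext fun y => by
    rw [@Finset.mem_inter W i1, @Finset.mem_inter W i2]

lemma cherry_forward {V : Type*} [Fintype V]
    (G : SimpleGraph V) (G' : SimpleGraph (V ⊕ Fin 3)) (t : V → ℕ)
    (t' : V ⊕ Fin 3 → ℕ) (v : V) (k : ℕ)
    (h1 : ∀ a b : V, G'.Adj (Sum.inl a) (Sum.inl b) ↔ G.Adj a b)
    (h2 : ∀ (a : V) (i : Fin 3), G'.Adj (Sum.inl a) (Sum.inr i) ↔ (a = v ∧ i = 1))
    (h3 : ∀ i j : Fin 3, G'.Adj (Sum.inr i) (Sum.inr j) ↔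
      ((i = 0 ∧ j = 1) ∨ (i = 1 ∧ j = 0) ∨ (i = 1 ∧ j = 2) ∨ (i = 2 ∧ j = 1)))
    (htv : t' (Sum.inl v) = t v + 1)
    (htx : ∀ x : V, x ≠ v → t' (Sum.inl x) = t x)
    (ht1 : t' (Sum.inr 1) = 2)
    (htj : ∀ j : Fin 3, j ≠ 1 → t' (Sum.inr j) = 1) :
    (∃ S : Finset V, S.card ≤ k ∧ IsTargetSet G t S) →
      ∃ S' : Finset (V ⊕ Fin 3), S'.card ≤ k + 1 ∧ IsTargetSet G' t' S' := by
  have EQ : ∀ (s u : Finset (V ⊕ Fin 3)), s ∩ u =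
      @Inter.inter _ (@Finset.instInter _ (fun a b => Classical.propDecidable (a = b))) s u :=
    fun s u => inter_irrel s u
  rintro ⟨S, hS, N, hN⟩
  refine ⟨insert (Sum.inr (1 : Fin 3)) (S.image Sum.inl), ?_, ?_⟩
  · have h4 := Finset.card_insert_le (Sum.inr (1 : Fin 3)) (S.image Sum.inl)
    have h5 := Finset.card_image_le (f := (Sum.inl : V → V ⊕ Fin 3)) (s := S)
    omega
  set S' : Finset (V ⊕ Fin 3) := insert (Sum.inr (1 : Fin 3)) (S.image Sum.inl) with hS'def
  have mono : ∀ i, infect G' t' S' i ⊆ infect G' t' S' (i + 1) :=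
    infect_mono_succ' G' t' S'
  have main : ∀ i, (∀ j : Fin 3, Sum.inr j ∈ infect G' t' S' (i + 1)) ∧
      (∀ x ∈ infect G t S i, Sum.inl x ∈ infect G' t' S' (i + 1)) := by
    intro i
    induction i with
    | zero =>
      have hinr1 : Sum.inr (1 : Fin 3) ∈ infect G' t' S' 1 := by
        rw [infect_succ', mem_infectStep'_s16]
        exact Or.inl (by rw [hS'def]; exact Finset.mem_insert_self _ _)
      have hside : ∀ j : Fin 3, j ≠ 1 → Sum.inr j ∈ infect G' t' S' 1 := by
        intro j hj
        rw [infect_succ', mem_infectStep'_s16]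
        right
        rw [htj j hj]
        refine Finset.card_pos.mpr ⟨Sum.inr (1 : Fin 3), ?_⟩
        rw [← EQ, Finset.mem_inter]
        refine ⟨?_, ?_⟩
        · rw [SimpleGraph.mem_neighborFinset, h3]
          fin_cases j
          · exact Or.inl ⟨rfl, rfl⟩
          · exact absurd rfl hj
          · exact Or.inr (Or.inr (Or.inr ⟨rfl, rfl⟩))
        · show Sum.inr (1 : Fin 3) ∈ S'
          rw [hS'def]
          exact Finset.mem_insert_self _ _
      refine ⟨?_, ?_⟩
      · intro j
        by_cases hj : j = 1
        · subst hj; exact hinr1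
        · exact hside j hj
      · intro x hx
        rw [infect_succ', mem_infectStep'_s16]
        left
        rw [hS'def]
        exact Finset.mem_insert_of_mem (Finset.mem_image_of_mem _ hx)
    | succ i ih =>
      obtain ⟨ihcherry, ihinl⟩ := ih
      refine ⟨fun j => mono (i + 1) (ihcherry j), ?_⟩
      intro x hx
      rw [infect_succ', mem_infectStep'_s16] at hx
      rcases hx with hx | hx
      · exact mono (i + 1) (ihinl x hx)
      · rw [infect_succ', mem_infectStep'_s16]
        right
        by_cases hxv : x = v
        · subst hxv
          have hsub : insert (Sum.inr (1 : Fin 3))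
              ((G.neighborFinset x ∩ infect G t S i).image Sum.inl) ⊆
              G'.neighborFinset (Sum.inl x) ∩ infect G' t' S' (i + 1) := by
            intro y hy
            rcases Finset.mem_insert.mp hy with rfl | hy
            · refine Finset.mem_inter.mpr ⟨?_, ihcherry 1⟩
              rw [SimpleGraph.mem_neighborFinset, h2]
              exact ⟨rfl, rfl⟩
            · obtain ⟨a, ha, rfl⟩ := Finset.mem_image.mp hy
              obtain ⟨ha1, ha2⟩ := Finset.mem_inter.mp ha
              refine Finset.mem_inter.mpr ⟨?_, ihinl a ha2⟩
              rw [SimpleGraph.mem_neighborFinset, h1]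
              exact (SimpleGraph.mem_neighborFinset _ _ _).mp ha1
          have hc := Finset.card_le_card hsub
          rw [Finset.card_insert_of_notMem (by simp),
            Finset.card_image_of_injective _ Sum.inl_injective] at hc
          simp only [EQ] at hc
          rw [htv]
          omega
        · have hsub : (G.neighborFinset x ∩ infect G t S i).image Sum.inl ⊆
              G'.neighborFinset (Sum.inl x) ∩ infect G' t' S' (i + 1) := by
            intro y hy
            obtain ⟨a, ha, rfl⟩ := Finset.mem_image.mp hy
            obtain ⟨ha1, ha2⟩ := Finset.mem_inter.mp ha
            refine Finset.mem_inter.mpr ⟨?_, ihinl a ha2⟩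
            rw [SimpleGraph.mem_neighborFinset, h1]
            exact (SimpleGraph.mem_neighborFinset _ _ _).mp ha1
          have hc := Finset.card_le_card hsub
          rw [Finset.card_image_of_injective _ Sum.inl_injective] at hc
          simp only [EQ] at hc
          rw [htx x hxv]
          omega
  refine ⟨N + 1, Finset.eq_univ_iff_forall.mpr ?_⟩
  intro y
  match y with
  | Sum.inl x => exact (main N).2 x (by rw [hN]; exact Finset.mem_univ x)
  | Sum.inr j => exact (main N).1 j

lemma cherry_backward {V : Type*} [Fintype V]
    (G : SimpleGraph V) (G' : SimpleGraph (V ⊕ Fin 3)) (t : V → ℕ)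
    (t' : V ⊕ Fin 3 → ℕ) (v : V) (k : ℕ)
    (h1 : ∀ a b : V, G'.Adj (Sum.inl a) (Sum.inl b) ↔ G.Adj a b)
    (h2 : ∀ (a : V) (i : Fin 3), G'.Adj (Sum.inl a) (Sum.inr i) ↔ (a = v ∧ i = 1))
    (h3 : ∀ i j : Fin 3, G'.Adj (Sum.inr i) (Sum.inr j) ↔
      ((i = 0 ∧ j = 1) ∨ (i = 1 ∧ j = 0) ∨ (i = 1 ∧ j = 2) ∨ (i = 2 ∧ j = 1)))
    (htv : t' (Sum.inl v) = t v + 1)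
    (htx : ∀ x : V, x ≠ v → t' (Sum.inl x) = t x)
    (ht1 : t' (Sum.inr 1) = 2)
    (htj : ∀ j : Fin 3, j ≠ 1 → t' (Sum.inr j) = 1) :
    (∃ S' : Finset (V ⊕ Fin 3), S'.card ≤ k + 1 ∧ IsTargetSet G' t' S') →
      ∃ S : Finset V, S.card ≤ k ∧ IsTargetSet G t S := by
  have EQ : ∀ (s u : Finset (V ⊕ Fin 3)), s ∩ u =
      @Inter.inter _ (@Finset.instInter _ (fun a b => Classical.propDecidable (a = b))) s u :=
    fun s u => inter_irrel s u
  rintro ⟨S', hS', N, hN⟩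
  have hcherry : ∃ j : Fin 3, Sum.inr j ∈ S' := by
    by_contra h
    push_neg at h
    have hnever : ∀ i (j : Fin 3), Sum.inr j ∉ infect G' t' S' i := by
      intro i
      induction i with
      | zero => exact h
      | succ i ih =>
        intro j hj
        rw [infect_succ', mem_infectStep'_s16] at hj
        rcases hj with hj | hj
        · exact ih j hj
        · by_cases hj1 : j = 1
          · subst hj1
            have hsub : G'.neighborFinset (Sum.inr 1) ∩ infect G' t' S' i ⊆
                {Sum.inl v} := by
              intro y hy
              obtain ⟨hy1, hy2⟩ := Finset.mem_inter.mp hy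
              rw [SimpleGraph.mem_neighborFinset] at hy1
              match y with
              | Sum.inl a =>
                rw [G'.adj_comm, h2] at hy1
                simp [hy1.1]
              | Sum.inr m => exact absurd hy2 (ih m)
            have hc := Finset.card_le_card hsub
            rw [Finset.card_singleton] at hc
            simp only [EQ] at hc
            rw [ht1] at hj
            omega
          · have hsub : G'.neighborFinset (Sum.inr j) ∩ infect G' t' S' i = ∅ := by
              rw [Finset.eq_empty_iff_forall_notMem]
              intro y hy
              obtain ⟨hy1, hy2⟩ := Finset.mem_inter.mp hy
              rw [SimpleGraph.mem_neighborFinset] at hy1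
              match y with
              | Sum.inl a =>
                rw [G'.adj_comm, h2] at hy1
                fin_cases j
                · exact absurd hy1.2 (by decide)
                · exact hj1 rfl
                · exact absurd hy1.2 (by decide)
              | Sum.inr m => exact ih m hy2
            simp only [EQ] at hsub
            rw [hsub, htj j hj1] at hj
            simp at hj
    exact hnever N 0 (by rw [hN]; exact Finset.mem_univ _)
  obtain ⟨j, hj⟩ := hcherry
  set S : Finset V := Finset.univ.filter (fun x => Sum.inl x ∈ S') with hSdef
  have hcard : S.card ≤ k := by
    have hsub : S.image Sum.inl ⊆ S'.erase (Sum.inr j) := by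
      intro y hy
      obtain ⟨a, ha, rfl⟩ := Finset.mem_image.mp hy
      rw [hSdef, Finset.mem_filter] at ha
      exact Finset.mem_erase.mpr ⟨by simp, ha.2⟩
    have hc := Finset.card_le_card hsub
    rw [Finset.card_erase_of_mem hj,
      Finset.card_image_of_injective _ Sum.inl_injective] at hc
    have hpos : 1 ≤ S'.card := Finset.card_pos.mpr ⟨_, hj⟩
    omega
  have dom : ∀ i x, Sum.inl x ∈ infect G' t' S' i → x ∈ infect G t S i := by
    intro i
    induction i with
    | zero =>
      intro x hx
      rw [hSdef]
      exact Finset.mem_filter.mpr ⟨Finset.mem_univ _, hx⟩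
    | succ i ih =>
      intro x hx
      rw [infect_succ', mem_infectStep'_s16] at hx ⊢
      rcases hx with hx | hx
      · exact Or.inl (ih x hx)
      · right
        by_cases hxv : x = v
        · subst hxv
          have hsub : G'.neighborFinset (Sum.inl x) ∩ infect G' t' S' i ⊆
              insert (Sum.inr 1) ((G.neighborFinset x ∩ infect G t S i).image Sum.inl) := by
            intro y hy
            obtain ⟨hy1, hy2⟩ := Finset.mem_inter.mp hy
            rw [SimpleGraph.mem_neighborFinset] at hy1
            match y with
            | Sum.inl a =>
              rw [h1] at hy1
              refine Finset.mem_insert.mpr (Or.inr (Finset.mem_image.mpr ⟨a, ?_, rfl⟩))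
              exact Finset.mem_inter.mpr
                ⟨(SimpleGraph.mem_neighborFinset _ _ _).mpr hy1, ih a hy2⟩
            | Sum.inr m =>
              rw [h2] at hy1
              simp [hy1.2]
          have hc := Finset.card_le_card hsub
          rw [Finset.card_insert_of_notMem (by simp),
            Finset.card_image_of_injective _ Sum.inl_injective] at hc
          simp only [EQ] at hc
          rw [htv] at hx
          omega
        · have hsub : G'.neighborFinset (Sum.inl x) ∩ infect G' t' S' i ⊆
              (G.neighborFinset x ∩ infect G t S i).image Sum.inl := by
            intro y hy
            obtain ⟨hy1, hy2⟩ := Finset.mem_inter.mp hy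
            rw [SimpleGraph.mem_neighborFinset] at hy1
            match y with
            | Sum.inl a =>
              rw [h1] at hy1
              refine Finset.mem_image.mpr ⟨a, ?_, rfl⟩
              exact Finset.mem_inter.mpr
                ⟨(SimpleGraph.mem_neighborFinset _ _ _).mpr hy1, ih a hy2⟩
            | Sum.inr m =>
              rw [h2] at hy1
              exact absurd hy1.1 hxv
          have hc := Finset.card_le_card hsub
          rw [Finset.card_image_of_injective _ Sum.inl_injective] at hc
          simp only [EQ] at hc
          rw [htx x hxv] at hx
          omega
  refine ⟨S, hcard, N, Finset.eq_univ_iff_forall.mpr ?_⟩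
  intro x
  exact dom N x (by rw [hN]; exact Finset.mem_univ _)

/-- Cherry gadget correctness: attaching a cherry (path gˡ–gᵐ–gʳ, encoded as
Fin 3 with 0 = gˡ, 1 = gᵐ, 2 = gʳ) to a vertex v via the edge {v, gᵐ}, with
thresholds 1, 2, 1 on the cherry and t(v) + 1 on v, the new instance has a
target set of size at most k + 1 iff the old one has one of size at most k. -/
theorem cherry_gadget_correct {V : Type*} [Fintype V] [DecidableEq V]
    (G : SimpleGraph V) (G' : SimpleGraph (V ⊕ Fin 3)) (t : V → ℕ) (v : V) (k : ℕ)
    (h1 : ∀ a b : V, G'.Adj (Sum.inl a) (Sum.inl b) ↔ G.Adj a b)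
    (h2 : ∀ (a : V) (i : Fin 3), G'.Adj (Sum.inl a) (Sum.inr i) ↔ (a = v ∧ i = 1))
    (h3 : ∀ i j : Fin 3, G'.Adj (Sum.inr i) (Sum.inr j) ↔
      ((i = 0 ∧ j = 1) ∨ (i = 1 ∧ j = 0) ∨ (i = 1 ∧ j = 2) ∨ (i = 2 ∧ j = 1))) :
    (∃ S : Finset V, S.card ≤ k ∧ IsTargetSet G t S) ↔
      (∃ S' : Finset (V ⊕ Fin 3), S'.card ≤ k + 1 ∧
        IsTargetSet G'
          (Sum.elim (fun x => if x = v then t v + 1 else t x)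
            (fun i : Fin 3 => if i = 1 then 2 else 1)) S') := by
  constructor
  · exact cherry_forward G G' t _ v k h1 h2 h3 (by simp) (fun x hx => by simp [hx])
      (by simp) (fun j hj => by simp [hj])
  · exact cherry_backward G G' t _ v k h1 h2 h3 (by simp) (fun x hx => by simp [hx])
      (by simp) (fun j hj => by simp [hj])
end
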